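/- Let H be a real Hilbert space, f_n, f_{n+1} ∈ H with f_{n+1} = f_n - c_{n+1}φ_{n+1} where ‖φ_{n+1}‖ = 1 and ⟨f_n, φ_{n+1}⟩ ≥ c·t_{n+1}‖f_n‖ for constants c > 0, t_{n+1} ∈ (0,1], c_{n+1} > 0. Suppose also c_{n+1}/t_{n+1} < ε, c_{n+1} < ε/c, and ‖f_n‖ ≥ ε/c. Then ‖f_{n+1}‖² ≤ ‖f_n‖² - c_{n+1} t_{n+1} ε. -/

import Mathlib

open RealInnerProductSpace

theorem stmt_1 (H : Type*) [NormedAddCommGroup H] [InnerProductSpace ℝ H]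
    (fn fn1 φ : H) (c t cn ε : ℝ)
    (hc : 0 < c) (ht0 : 0 < t) (ht1 : t ≤ 1) (hcn : 0 < cn) (hε : 0 < ε)
    (hφ : ‖φ‖ = 1)
    (hstep : fn1 = fn - cn • φ)
    (hsel : c * t * ‖fn‖ ≤ ⟪fn, φ⟫)
    (h1 : cn / t < ε)
    (h2 : cn < ε / c)
    (h3 : ε / c ≤ ‖fn‖) :
    ‖fn1‖ ^ 2 ≤ ‖fn‖ ^ 2 - cn * t * ε := by
  have hexp : ‖fn1‖ ^ 2 = ‖fn‖ ^ 2 - 2 * cn * ⟪fn, φ⟫ + cn ^ 2 := by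
    rw [hstep, norm_sub_sq_real, real_inner_smul_right, norm_smul, hφ]
    simp [abs_of_pos hcn]
    ring
  have hip : t * ε ≤ ⟪fn, φ⟫ := by
    calc t * ε = c * t * (ε / c) := by field_simp
    _ ≤ c * t * ‖fn‖ := by
        apply mul_le_mul_of_nonneg_left h3 (by positivity)
    _ ≤ ⟪fn, φ⟫ := hsel
  have hcn2 : cn ≤ t * ε := by
    have := (div_lt_iff₀ ht0).mp h1
    nlinarith
  nlinarith [sq_nonneg cn]
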